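/- Let p be a prime and G a group whose commutator subgroup G' is a p-group (every element of G' has order a power of p). Then the set P of all elements of G of p-power order is a normal subgroup of G. -/
import Mathlib


/-- Step in the proof of Proposition 3.8: if the commutator subgroup of `G` is a
`p`-group, then the set `P` of all elements of `G` of `p`-power order is a normal
subgroup of `G`. -/
theorem p_elements_form_normal_subgroup (p : ℕ) (hp : p.Prime)
    (G : Type*) [Group G] (hG' : IsPGroup p (commutator G)) :
    ∃ P : Subgroup G, P.Normal ∧ ∀ g : G, g ∈ P ↔ ∃ k : ℕ, orderOf g = p ^ k := by
  have key : ∀ a b : G, (∃ i, a ^ p ^ i = 1) → (∃ j, b ^ p ^ j = 1) →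
      ∃ k, (a * b) ^ p ^ k = 1 := by
    rintro a b ⟨i, hi⟩ ⟨j, hj⟩
    have ha : (Abelianization.of a) ^ p ^ (i + j) = 1 := by
      rw [← map_pow, pow_add, pow_mul, hi, one_pow, map_one]
    have hb : (Abelianization.of b) ^ p ^ (i + j) = 1 := by
      rw [← map_pow, pow_add, pow_mul', hj, one_pow, map_one]
    have hmem : (a * b) ^ p ^ (i + j) ∈ commutator G := by
      have : Abelianization.of ((a * b) ^ p ^ (i + j)) = 1 := by
        rw [map_pow, map_mul, mul_pow, ha, hb, one_mul]
      exact (QuotientGroup.eq_one_iff _).mp this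
    obtain ⟨m, hm⟩ := hG' ⟨_, hmem⟩
    refine ⟨i + j + m, ?_⟩
    have hm' : ((a * b) ^ p ^ (i + j)) ^ p ^ m = 1 := by
      have := congrArg (Subtype.val) hm
      simpa using this
    rw [pow_add, pow_mul, hm']
  refine ⟨{ carrier := {g | ∃ k, g ^ p ^ k = 1}
            one_mem' := ⟨0, by simp⟩
            mul_mem' := fun ha hb => key _ _ ha hb
            inv_mem' := by rintro a ⟨k, hk⟩; exact ⟨k, by rw [inv_pow, hk, inv_one]⟩ }, ?_, ?_⟩
  · constructor
    rintro a ⟨k, hk⟩ g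
    refine ⟨k, ?_⟩
    have : (g * a * g⁻¹) ^ p ^ k = g * a ^ p ^ k * g⁻¹ := by
      simpa [MulAut.conj_apply] using map_pow (MulAut.conj g) a (p ^ k)
    rw [this, hk, mul_one, mul_inv_cancel]
  · intro g
    constructor
    · rintro ⟨k, hk⟩
      obtain ⟨m, -, hm⟩ := (Nat.dvd_prime_pow hp).mp (orderOf_dvd_of_pow_eq_one hk)
      exact ⟨m, hm⟩
    · rintro ⟨k, hk⟩
      exact ⟨k, by rw [← hk, pow_orderOf_eq_one]⟩
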